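/- Let f : Δ → [0,1] be a non-uniformly expanding Markov map. Assume condition (M3): there exists s > 1 such that whenever a₁a₂ is an admissible word of length 2 for which either a₂ is an expanding index or a₁ ≠ a₂, one has inf_{x ∈ Δ_{a₁a₂}} |(f²)'(x)| ≥ s. Then f has uniform decay of cylinders, i.e. sup_{ω∈Eⁿ} |Δ_ω| → 0 as n → ∞. -/

import Mathlib

open Filter MeasureTheory Set

/-- A Markov map of the interval `[0,1]` with countably many branches indexed by `S`:
a family `{Δ_a}` of nonempty connected subsets of `[0,1]` with pairwise disjoint
interiors, a map `f` whose restriction to each `Δ_a` is a C¹ diffeomorphism onto its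
image with bounded derivative (the branch derivative is `f' a`), mapping into `[0,1]`,
and satisfying the Markov property: if `f(Δ_a) ∩ Δ_b` has nonempty interior then
`f(Δ_a) ⊇ Δ_b`. -/
structure MarkovMap (S : Type) where
  Δ : S → Set ℝ
  f : ℝ → ℝ
  f' : S → ℝ → ℝ
  nonempty : ∀ a, (Δ a).Nonempty
  subset_unit : ∀ a, Δ a ⊆ Set.Icc 0 1
  conn : ∀ a, IsPreconnected (Δ a)
  disj_int : Pairwise fun a b => interior (Δ a) ∩ interior (Δ b) = ∅
  maps_unit : ∀ a, Set.MapsTo f (Δ a) (Set.Icc 0 1)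
  inj : ∀ a, Set.InjOn f (Δ a)
  hasDeriv : ∀ a, ∀ x ∈ Δ a, HasDerivWithinAt f (f' a x) (Δ a) x
  derivCont : ∀ a, ContinuousOn (f' a) (Δ a)
  derivNe : ∀ a, ∀ x ∈ Δ a, f' a x ≠ 0
  derivBdd : ∀ a, ∃ C : ℝ, ∀ x ∈ Δ a, |f' a x| ≤ C
  markov : ∀ a b, (interior (f '' Δ a ∩ Δ b)).Nonempty → Δ b ⊆ f '' Δ a

namespace MarkovMap

variable {S : Type} (M : MarkovMap S)

/-- A (nonempty) word is admissible if every transition `ω_j → ω_{j+1}` satisfies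
`f(Δ_{ω_j}) ⊇ Δ_{ω_{j+1}}`. -/
def Adm (w : List S) : Prop :=
  w ≠ [] ∧ w.Chain' fun a b => M.Δ b ⊆ M.f '' M.Δ a

/-- The cylinder `Δ_ω = ⋂_{j<n} f^{−j}(Δ_{ω_j})` of a word `ω`. -/
def cyl (w : List S) : Set ℝ :=
  {x | ∀ j : Fin w.length, M.f^[(j : ℕ)] x ∈ M.Δ (w.get j)}

/-- Uniform decay of cylinders: `sup_{ω ∈ Eⁿ} |Δ_ω| → 0` as `n → ∞`. -/
def UniformDecay : Prop :=
  ∀ ε : ℝ, 0 < ε → ∃ N : ℕ, ∀ w : List S, M.Adm w → N ≤ w.length →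
    Metric.diam (M.cyl w) < ε

/-- Finite irreducibility: there is a finite set `Λ` of words, each empty or
admissible, such that any two admissible words can be admissibly joined by some
`λ ∈ Λ`. -/
def FinIrr : Prop :=
  ∃ Λ : Finset (List S), (∀ l ∈ Λ, l = [] ∨ M.Adm l) ∧
    ∀ w v : List S, M.Adm w → M.Adm v → ∃ l ∈ Λ, M.Adm (w ++ l ++ v)

/-- `f` is non-uniformly expanding: `|f'| > 1` everywhere except at finitely many
pairs `(a, x_a)` with `x_a ∈ Δ_a` and `|f_a'(x_a)| = 1`. -/
def NonUnifExp : Prop :=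
  ∃ N : Set (S × ℝ), N.Finite ∧
    (∀ p ∈ N, p.2 ∈ M.Δ p.1 ∧ |M.f' p.1 p.2| = 1) ∧
    ∀ a, ∀ x ∈ M.Δ a, (a, x) ∉ N → 1 < |M.f' a x|

/-- Birkhoff sum `S_n φ = Σ_{j<n} φ ∘ f^j`. -/
noncomputable def birk (φ : ℝ → ℝ) (n : ℕ) (x : ℝ) : ℝ :=
  ∑ j ∈ Finset.range n, φ (M.f^[j] x)

/-- `φ` belongs to the class `𝓕`: there is a bound `D n` on `S_nφ(x) − S_nφ(y)`
over pairs `x, y` in a common `n`-cylinder (in particular `D_1(φ) < ∞`), with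
`D n / n → 0` (i.e. `D_n(φ) = o(n)`). -/
def MemF (φ : ℝ → ℝ) : Prop :=
  ∃ D : ℕ → ℝ,
    (∀ w : List S, M.Adm w → ∀ x ∈ M.cyl w, ∀ y ∈ M.cyl w,
      M.birk φ w.length x - M.birk φ w.length y ≤ D w.length) ∧
    Tendsto (fun n : ℕ => D n / n) atTop (nhds 0)

/-- The Birkhoff sum of `log |f'|` along a word, using the branch derivatives. -/
noncomputable def logDerivSum (w : List S) (x : ℝ) : ℝ :=
  ∑ j : Fin w.length, Real.log |M.f' (w.get j) (M.f^[(j : ℕ)] x)|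

/-- Mild distortion: `log |f'| ∈ 𝓕`. -/
def MildDistortion : Prop :=
  ∃ D : ℕ → ℝ,
    (∀ w : List S, M.Adm w → ∀ x ∈ M.cyl w, ∀ y ∈ M.cyl w,
      M.logDerivSum w x - M.logDerivSum w y ≤ D w.length) ∧
    Tendsto (fun n : ℕ => D n / n) atTop (nhds 0)

/-- The maximal invariant set `J = ⋂_{n≥0} f^{−n}(Δ)`. -/
def Jset : Set ℝ := {x | ∀ n : ℕ, M.f^[n] x ∈ ⋃ a, M.Δ a}

open Classical in
/-- The function `log |f'|` on `Δ` (via a choice of branch), extended by `0`. -/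
noncomputable def logDerivFn (x : ℝ) : ℝ :=
  if h : ∃ a, x ∈ M.Δ a then Real.log |M.f' h.choose x| else 0

lemma ordConn (a : S) : (M.Δ a).OrdConnected := (M.conn a).ordConnected

lemma contOn (a : S) : ContinuousOn M.f (M.Δ a) :=
  fun x hx => (M.hasDeriv a x hx).continuousWithinAt

variable {M}

lemma mono_uIcc {a : S} {x y z : ℝ} (hx : x ∈ M.Δ a) (hy : y ∈ M.Δ a)
    (hz : z ∈ uIcc x y) : M.f z ∈ uIcc (M.f x) (M.f y) := by
  wlog hxy : x ≤ y generalizing x y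
  · rw [uIcc_comm] at hz ⊢; exact this hy hx hz (le_of_not_ge hxy)
  rw [uIcc_of_le hxy] at hz
  have hsub : Icc x y ⊆ M.Δ a := (M.ordConn a).out hx hy
  rcases ContinuousOn.strictMonoOn_of_injOn_Icc' hxy ((M.contOn a).mono hsub)
      ((M.inj a).mono hsub) with h | h
  · have h1 := h.monotoneOn (left_mem_Icc.2 hxy) hz hz.1
    have h2 := h.monotoneOn hz (right_mem_Icc.2 hxy) hz.2
    exact mem_uIcc.2 (Or.inl ⟨h1, h2⟩)
  · have h1 := h.antitoneOn (left_mem_Icc.2 hxy) hz hz.1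
    have h2 := h.antitoneOn hz (right_mem_Icc.2 hxy) hz.2
    exact mem_uIcc.2 (Or.inr ⟨h2, h1⟩)

lemma hasDerivAt_of_Ioo {a : S} {u v c : ℝ} (hu : u ∈ M.Δ a) (hv : v ∈ M.Δ a)
    (hc : c ∈ Ioo u v) : HasDerivAt M.f (M.f' a c) c := by
  have hsub : Ioo u v ⊆ M.Δ a := fun t ht => (M.ordConn a).out hu hv ⟨le_of_lt ht.1, le_of_lt ht.2⟩
  exact (M.hasDeriv a c (hsub hc)).hasDerivAt (mem_nhds_iff.2 ⟨Ioo u v, hsub, isOpen_Ioo, hc⟩)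

section NUE
variable {N : Set (S × ℝ)}
  (hNmem : ∀ p ∈ N, p.2 ∈ M.Δ p.1 ∧ |M.f' p.1 p.2| = 1)
  (hexp : ∀ a, ∀ x ∈ M.Δ a, (a, x) ∉ N → 1 < |M.f' a x|)

include hNmem hexp

lemma one_le_abs_f' {a : S} {x : ℝ} (hx : x ∈ M.Δ a) : 1 ≤ |M.f' a x| := by
  by_cases h : (a, x) ∈ N
  · exact (hNmem _ h).2.ge
  · exact (hexp a x hx h).le

lemma expand_step {a : S} {x y : ℝ} (hx : x ∈ M.Δ a) (hy : y ∈ M.Δ a) :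
    |x - y| ≤ |M.f x - M.f y| := by
  wlog hxy : x ≤ y generalizing x y
  · rw [abs_sub_comm, abs_sub_comm (M.f x)]; exact this hy hx (le_of_not_ge hxy)
  rcases eq_or_lt_of_le hxy with rfl | hlt
  · rw [sub_self, sub_self]
  have hsub : Icc x y ⊆ M.Δ a := (M.ordConn a).out hx hy
  obtain ⟨c, hc, hceq⟩ := exists_hasDerivAt_eq_slope M.f (fun t => M.f' a t) hlt
    ((M.contOn a).mono hsub) (fun t ht => hasDerivAt_of_Ioo hx hy ht)
  have hc' : c ∈ M.Δ a := hsub (Ioo_subset_Icc_self hc)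
  have h1 : 1 ≤ |M.f' a c| := one_le_abs_f' hNmem hexp hc'
  have heq : M.f y - M.f x = M.f' a c * (y - x) := by
    rw [hceq, div_mul_cancel₀ _ (sub_ne_zero.2 hlt.ne')]
  have : |M.f y - M.f x| = |M.f' a c| * |y - x| := by rw [heq, abs_mul]
  rw [abs_sub_comm x y, abs_sub_comm (M.f x) (M.f y), this]
  nlinarith [abs_nonneg (y - x)]

end NUE

lemma mem_cyl_iff {w : List S} {x : ℝ} :
    x ∈ M.cyl w ↔ ∀ j : Fin w.length, M.f^[(j : ℕ)] x ∈ M.Δ (w.get j) := Iff.rfl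

lemma mem_cyl_pair {a₁ a₂ : S} {x : ℝ} :
    x ∈ M.cyl [a₁, a₂] ↔ x ∈ M.Δ a₁ ∧ M.f x ∈ M.Δ a₂ := by
  constructor
  · intro h
    exact ⟨by simpa using h ⟨0, by norm_num⟩, by simpa using h ⟨1, by norm_num⟩⟩
  · rintro ⟨h1, h2⟩ j
    fin_cases j <;> simpa

lemma iter_mem_uIcc {w : List S} {x y z : ℝ} (hx : x ∈ M.cyl w) (hy : y ∈ M.cyl w)
    (hz : z ∈ uIcc x y) :
    ∀ j : ℕ, j ≤ w.length → M.f^[j] z ∈ uIcc (M.f^[j] x) (M.f^[j] y) := by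
  intro j
  induction j with
  | zero => intro _; simpa using hz
  | succ j ih =>
    intro hj
    have hj' : j < w.length := Nat.lt_of_succ_le hj
    have hxj := hx ⟨j, hj'⟩
    have hyj := hy ⟨j, hj'⟩
    rw [Function.iterate_succ_apply', Function.iterate_succ_apply',
      Function.iterate_succ_apply']
    exact mono_uIcc hxj hyj (ih hj'.le)

lemma mem_cyl_of_uIcc {w : List S} {x y z : ℝ} (hx : x ∈ M.cyl w) (hy : y ∈ M.cyl w)
    (hz : z ∈ uIcc x y) : z ∈ M.cyl w := fun j =>
  (M.ordConn _).uIcc_subset (hx j) (hy j) (iter_mem_uIcc hx hy hz (j : ℕ) j.2.le)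

section NUE2
variable {N : Set (S × ℝ)}
  (hNmem : ∀ p ∈ N, p.2 ∈ M.Δ p.1 ∧ |M.f' p.1 p.2| = 1)
  (hexp : ∀ a, ∀ x ∈ M.Δ a, (a, x) ∉ N → 1 < |M.f' a x|)

include hNmem hexp

lemma dist_iter_mono {w : List S} {x y : ℝ} (hx : x ∈ M.cyl w) (hy : y ∈ M.cyl w) :
    ∀ i j : ℕ, i ≤ j → j ≤ w.length →
      |M.f^[i] x - M.f^[i] y| ≤ |M.f^[j] x - M.f^[j] y| := by
  intro i j hij
  induction j with
  | zero =>
    intro _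
    obtain rfl : i = 0 := Nat.le_zero.1 hij
    exact le_rfl
  | succ j ih =>
    intro hj
    rcases Nat.eq_or_lt_of_le hij with rfl | hlt
    · exact le_rfl
    · have hj' : j < w.length := Nat.lt_of_succ_le hj
      refine le_trans (ih (Nat.lt_succ_iff.1 hlt) hj'.le) ?_
      rw [Function.iterate_succ_apply', Function.iterate_succ_apply']
      exact expand_step hNmem hexp (hx ⟨j, hj'⟩) (hy ⟨j, hj'⟩)

end NUE2

lemma two_step {a₁ a₂ : S} {s : ℝ} (hs : 0 < s)
    (hM3pair : ∀ c ∈ M.cyl [a₁, a₂], s ≤ |M.f' a₂ (M.f c) * M.f' a₁ c|)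
    {x y : ℝ} (hx : x ∈ M.cyl [a₁, a₂]) (hy : y ∈ M.cyl [a₁, a₂]) :
    s * |x - y| ≤ |M.f (M.f x) - M.f (M.f y)| := by
  wlog hxy : x ≤ y generalizing x y
  · rw [abs_sub_comm, abs_sub_comm (M.f (M.f x))]; exact this hy hx (le_of_not_ge hxy)
  obtain ⟨hx1, hx2⟩ := mem_cyl_pair.1 hx
  obtain ⟨hy1, hy2⟩ := mem_cyl_pair.1 hy
  rcases eq_or_lt_of_le hxy with rfl | hlt
  · simp
  have hsub : Icc x y ⊆ M.Δ a₁ := (M.ordConn a₁).out hx1 hy1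
  have hmaps : ∀ t ∈ Icc x y, M.f t ∈ uIcc (M.f x) (M.f y) := fun t ht =>
    mono_uIcc hx1 hy1 (by rwa [uIcc_of_le hxy])
  have hsub2 : uIcc (M.f x) (M.f y) ⊆ M.Δ a₂ := (M.ordConn a₂).uIcc_subset hx2 hy2
  have hcont : ContinuousOn (M.f ∘ M.f) (Icc x y) :=
    (M.contOn a₂).comp ((M.contOn a₁).mono hsub) (fun t ht => hsub2 (hmaps t ht))
  have hderiv : ∀ c ∈ Ioo x y,
      HasDerivAt (M.f ∘ M.f) (M.f' a₂ (M.f c) * M.f' a₁ c) c := by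
    intro c hc
    have hcI : c ∈ Icc x y := Ioo_subset_Icc_self hc
    have hc1 : c ∈ M.Δ a₁ := hsub hcI
    have h₁ : HasDerivAt M.f (M.f' a₁ c) c := hasDerivAt_of_Ioo hx1 hy1 hc
    have hfc : M.f c ∈ uIcc (M.f x) (M.f y) := hmaps c hcI
    have hnex : M.f c ≠ M.f x := fun h => hc.1.ne' (M.inj a₁ hc1 hx1 h)
    have hney : M.f c ≠ M.f y := fun h => hc.2.ne (M.inj a₁ hc1 hy1 h)
    have hlo : M.f x ⊓ M.f y ∈ M.Δ a₂ := by
      rcases le_total (M.f x) (M.f y) with h | h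
      · rwa [inf_eq_left.2 h]
      · rwa [inf_eq_right.2 h]
    have hhi : M.f x ⊔ M.f y ∈ M.Δ a₂ := by
      rcases le_total (M.f x) (M.f y) with h | h
      · rwa [sup_eq_right.2 h]
      · rwa [sup_eq_left.2 h]
    have hnelo : M.f c ≠ M.f x ⊓ M.f y := by
      rcases le_total (M.f x) (M.f y) with h | h
      · rwa [inf_eq_left.2 h]
      · rwa [inf_eq_right.2 h]
    have hnehi : M.f c ≠ M.f x ⊔ M.f y := by
      rcases le_total (M.f x) (M.f y) with h | h
      · rwa [sup_eq_right.2 h]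
      · rwa [sup_eq_left.2 h]
    have hfcIoo : M.f c ∈ Ioo (M.f x ⊓ M.f y) (M.f x ⊔ M.f y) :=
      ⟨lt_of_le_of_ne hfc.1 (Ne.symm hnelo), lt_of_le_of_ne hfc.2 hnehi⟩
    have h₂ : HasDerivAt M.f (M.f' a₂ (M.f c)) (M.f c) := hasDerivAt_of_Ioo hlo hhi hfcIoo
    exact h₂.comp c h₁
  obtain ⟨c, hc, hceq⟩ := exists_hasDerivAt_eq_slope (M.f ∘ M.f)
    (fun t => M.f' a₂ (M.f t) * M.f' a₁ t) hlt hcont hderiv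
  have hcc : c ∈ M.cyl [a₁, a₂] := mem_cyl_of_uIcc hx hy
    (by rw [uIcc_of_le hxy]; exact Ioo_subset_Icc_self hc)
  have hss := hM3pair c hcc
  rw [hceq] at hss
  rw [abs_div] at hss
  rw [abs_sub_comm x y]
  have hyx : 0 < |y - x| := by rw [abs_of_pos (by linarith)]; linarith
  calc s * |y - x| ≤ |(M.f ∘ M.f) y - (M.f ∘ M.f) x| / |y - x| * |y - x| := by
        exact mul_le_mul_of_nonneg_right hss (abs_nonneg _)
    _ = |(M.f ∘ M.f) y - (M.f ∘ M.f) x| := div_mul_cancel₀ _ hyx.ne'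
    _ = |M.f (M.f x) - M.f (M.f y)| := by rw [abs_sub_comm]; rfl

lemma sign_const (a : S) : (∀ t ∈ M.Δ a, 0 < M.f' a t) ∨ (∀ t ∈ M.Δ a, M.f' a t < 0) := by
  by_contra h
  push_neg at h
  obtain ⟨⟨t₁, ht₁, h₁⟩, ⟨t₂, ht₂, h₂⟩⟩ := h
  have himg : IsPreconnected (M.f' a '' M.Δ a) := (M.conn a).image _ (M.derivCont a)
  have h0 : (0 : ℝ) ∈ M.f' a '' M.Δ a :=
    himg.ordConnected.out (mem_image_of_mem _ ht₁) (mem_image_of_mem _ ht₂) ⟨h₁, h₂⟩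
  obtain ⟨t, ht, h0⟩ := h0
  exact M.derivNe a t ht h0

lemma ftc_gap {a : S} {u v : ℝ} (hu : u ∈ M.Δ a) (hv : v ∈ M.Δ a) (huv : u ≤ v) :
    (v - u) + ∫ t in Ioo u v, ((M.Δ a).indicator fun t => |M.f' a t| - 1) t
      ≤ |M.f v - M.f u| := by
  have hsub : Icc u v ⊆ M.Δ a := (M.ordConn a).out hu hv
  have hfcont : ContinuousOn M.f (Icc u v) := (M.contOn a).mono hsub
  have hfderiv : ∀ t ∈ Ioo u v, HasDerivWithinAt M.f (M.f' a t) (Ioi t) t := fun t ht =>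
    (hasDerivAt_of_Ioo hu hv ht).hasDerivWithinAt
  have hint : IntervalIntegrable (M.f' a) volume u v := by
    apply ContinuousOn.intervalIntegrable
    rw [uIcc_of_le huv]; exact (M.derivCont a).mono hsub
  have hftc : ∫ t in u..v, M.f' a t = M.f v - M.f u :=
    intervalIntegral.integral_eq_sub_of_hasDeriv_right_of_le huv hfcont hfderiv hint
  have key : ∫ t in u..v, |M.f' a t| ≤ |M.f v - M.f u| := by
    rcases sign_const (M := M) a with hsg | hsg
    · have he : EqOn (fun t => |M.f' a t|) (M.f' a) (uIcc u v) := by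
        intro t ht
        rw [uIcc_of_le huv] at ht
        exact abs_of_pos (hsg t (hsub ht))
      rw [intervalIntegral.integral_congr he, hftc]
      exact le_abs_self _
    · have he : EqOn (fun t => |M.f' a t|) (fun t => -(M.f' a t)) (uIcc u v) := by
        intro t ht
        rw [uIcc_of_le huv] at ht
        exact abs_of_neg (hsg t (hsub ht))
      rw [intervalIntegral.integral_congr he, intervalIntegral.integral_neg, hftc]
      exact neg_le_abs _
  have habs : IntervalIntegrable (fun t => |M.f' a t|) volume u v := hint.abs
  have hone : ∫ t in u..v, (1 : ℝ) = v - u := by simp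
  have hsub1 := intervalIntegral.integral_sub habs (intervalIntegrable_const (c := (1:ℝ)))
  have hsplit : ∫ t in u..v, |M.f' a t|
      = (v - u) + ∫ t in u..v, (|M.f' a t| - 1) := by
    rw [hsub1, hone]
    ring
  have hindic : ∫ t in u..v, (|M.f' a t| - 1)
      = ∫ t in Ioo u v, ((M.Δ a).indicator fun t => |M.f' a t| - 1) t := by
    have he : EqOn (fun t => |M.f' a t| - 1)
        ((M.Δ a).indicator fun t => |M.f' a t| - 1) (uIcc u v) := by
      intro t ht
      rw [uIcc_of_le huv] at ht
      exact (indicator_of_mem (hsub ht) (fun t => |M.f' a t| - 1)).symm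
    rw [intervalIntegral.integral_congr he, intervalIntegral.integral_of_le huv,
      integral_Ioc_eq_integral_Ioo]
  rw [hindic] at hsplit
  rw [← hsplit]
  exact key

lemma mem_cyl_replicate {a : S} {k : ℕ} {x : ℝ} :
    x ∈ M.cyl (List.replicate k a) ↔ ∀ i < k, M.f^[i] x ∈ M.Δ a := by
  constructor
  · intro h i hi
    have := h ⟨i, by simpa using hi⟩
    simpa using this
  · intro h j
    have hj : (j : ℕ) < k := by have := j.2; simpa using this
    simpa using h (j : ℕ) hj

lemma mem_of_between_closure {a : S} {u v x : ℝ} (hu : u ∈ closure (M.Δ a))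
    (hv : v ∈ closure (M.Δ a)) (h1 : u < x) (h2 : x < v) : x ∈ M.Δ a := by
  obtain ⟨p, hp, hpd⟩ := Metric.mem_closure_iff.1 hu (x - u) (by linarith)
  obtain ⟨q, hq, hqd⟩ := Metric.mem_closure_iff.1 hv (v - x) (by linarith)
  rw [Real.dist_eq] at hpd hqd
  rcases abs_lt.1 hpd with ⟨hp1, hp2⟩
  rcases abs_lt.1 hqd with ⟨hq1, hq2⟩
  exact (M.ordConn a).out hp hq ⟨by linarith, by linarith⟩

section Block

variable {N : Set (S × ℝ)} (hfin : N.Finite)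
  (hNmem : ∀ p ∈ N, p.2 ∈ M.Δ p.1 ∧ |M.f' p.1 p.2| = 1)
  (hexp : ∀ a, ∀ x ∈ M.Δ a, (a, x) ∉ N → 1 < |M.f' a x|)

include hfin hNmem hexp

lemma block_decay (a : S) {ε : ℝ} (hε : 0 < ε) :
    ∃ k : ℕ, ∀ x ∈ M.cyl (List.replicate k a), ∀ y ∈ M.cyl (List.replicate k a),
      |x - y| ≤ ε := by
  by_contra hcon
  push_neg at hcon
  -- notation
  set φ : ℝ → ℝ := (M.Δ a).indicator fun t => |M.f' a t| - 1 with hφdef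
  have hφ0 : ∀ t, 0 ≤ φ t := by
    intro t
    apply Set.indicator_nonneg
    intro s hs
    have := one_le_abs_f' hNmem hexp hs
    linarith
  -- integrability
  obtain ⟨C, hC⟩ := M.derivBdd a
  have hmeasΔ : MeasurableSet (M.Δ a) := (M.ordConn a).measurableSet
  have hgcont : ContinuousOn (fun t => |M.f' a t| - 1) (M.Δ a) :=
    (M.derivCont a).abs.sub continuousOn_const
  have hμΔ : volume (M.Δ a) < ⊤ :=
    lt_of_le_of_lt (measure_mono (M.subset_unit a)) isCompact_Icc.measure_lt_top
  have hIG : IntegrableOn (fun t => |M.f' a t| - 1) (M.Δ a) := by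
    refine ⟨(hgcont.aemeasurable hmeasΔ).aestronglyMeasurable, ?_⟩
    apply HasFiniteIntegral.restrict_of_bounded (C := C + 1) hμΔ
    filter_upwards [ae_restrict_mem hmeasΔ] with t ht
    have h1 := hC t ht
    have h2 := one_le_abs_f' hNmem hexp ht
    rw [Real.norm_eq_abs, abs_of_nonneg (by linarith)]
    linarith
  have hInt : Integrable φ := hIG.integrable_indicator hmeasΔ
  -- the primitive and window function
  set H : ℝ → ℝ := fun t => ∫ x in (0:ℝ)..t, φ x with hHdef
  have hHcont : Continuous H :=
    intervalIntegral.continuous_primitive (fun _ _ => hInt.intervalIntegrable) 0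
  set h : ℝ → ℝ := fun u => H (u + ε) - H u with hhdef
  have hhcont : Continuous h := (hHcont.comp (continuous_id.add continuous_const)).sub hHcont
  have hwin : ∀ u : ℝ, h u = ∫ t in Ioo u (u + ε), φ t := by
    intro u
    have h1 : H (u + ε) - H u = ∫ t in u..(u + ε), φ t :=
      intervalIntegral.integral_interval_sub_left hInt.intervalIntegrable
        hInt.intervalIntegrable
    rw [hhdef]
    simp only []
    rw [h1, intervalIntegral.integral_of_le (by linarith), integral_Ioc_eq_integral_Ioo]
  -- the compact set A
  set A : Set ℝ := closure (M.Δ a) ∩ ((· + ε) ⁻¹' closure (M.Δ a)) with hAdef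
  have hAclosed : IsClosed A :=
    isClosed_closure.inter (isClosed_closure.preimage (continuous_id.add continuous_const))
  have hAsub : A ⊆ Icc 0 1 := fun u hu =>
    (closure_minimal (M.subset_unit a) isClosed_Icc) hu.1
  have hAcomp : IsCompact A := isCompact_Icc.of_isClosed_subset hAclosed hAsub
  -- Z, the neutral fiber
  have hZfin : {t : ℝ | (a, t) ∈ N}.Finite := by
    have : {t : ℝ | (a, t) ∈ N} = (fun t => (a, t)) ⁻¹' N := rfl
    rw [this]
    apply Set.Finite.preimage _ hfin
    intro p _ q _ hpq
    simpa using hpq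
  -- positivity on A
  have hpos : ∀ u ∈ A, 0 < h u := by
    intro u hu
    rw [hwin u]
    have hsubΔ : Ioo u (u + ε) ⊆ M.Δ a := fun t ht =>
      mem_of_between_closure hu.1 hu.2 ht.1 ht.2
    have hsupp : Ioo u (u + ε) \ {t : ℝ | (a, t) ∈ N}
        ⊆ Function.support φ ∩ Ioo u (u + ε) := by
      rintro t ⟨ht, htZ⟩
      refine ⟨?_, ht⟩
      have htΔ := hsubΔ ht
      rw [Function.mem_support, hφdef, indicator_of_mem htΔ]
      have := hexp a t htΔ htZ
      exact sub_ne_zero.2 (ne_of_gt this)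
    rw [setIntegral_pos_iff_support_of_nonneg_ae
      (Filter.Eventually.of_forall hφ0) hInt.integrableOn]
    calc (0 : ENNReal) < volume (Ioo u (u + ε)) := by
          rw [Real.volume_Ioo]; simp [hε]
      _ = volume (Ioo u (u + ε) \ {t : ℝ | (a, t) ∈ N}) :=
          (measure_diff_null (hZfin.measure_zero _)).symm
      _ ≤ volume (Function.support φ ∩ Ioo u (u + ε)) := measure_mono hsupp
  -- A is nonempty
  have hmkA : ∀ x y : ℝ, x ∈ M.Δ a → y ∈ M.Δ a → ε < |x - y| → x ⊓ y ∈ A := by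
    intro x y hx hy hxy
    have hkey : x ⊓ y ∈ M.Δ a ∧ x ⊓ y + ε ∈ M.Δ a := by
      rcases le_total x y with hle | hle
      · rw [inf_eq_left.2 hle]
        rw [abs_of_nonpos (by linarith)] at hxy
        exact ⟨hx, (M.ordConn a).out hx hy ⟨by linarith, by linarith⟩⟩
      · rw [inf_eq_right.2 hle]
        rw [abs_of_nonneg (by linarith)] at hxy
        exact ⟨hy, (M.ordConn a).out hy hx ⟨by linarith, by linarith⟩⟩
    exact ⟨subset_closure hkey.1, subset_closure hkey.2⟩
  have hAne : A.Nonempty := by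
    obtain ⟨x, hx, y, hy, hxy⟩ := hcon 1
    rw [mem_cyl_replicate] at hx hy
    have hx0 := hx 0 (by norm_num)
    have hy0 := hy 0 (by norm_num)
    simp only [Function.iterate_zero, id_eq] at hx0 hy0
    exact ⟨x ⊓ y, hmkA x y hx0 hy0 hxy⟩
  -- minimum δ of h on A
  obtain ⟨u₀, hu₀A, hu₀min⟩ := hAcomp.exists_isMinOn hAne hhcont.continuousOn
  set δ : ℝ := h u₀ with hδdef
  have hδpos : 0 < δ := hpos u₀ hu₀A
  have hδle : ∀ u ∈ A, δ ≤ h u := fun u hu => hu₀min hu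
  -- choose k
  set m : ℕ := ⌈1 / δ⌉₊ + 1 with hmdef
  set k : ℕ := m + 1 with hkdef
  have hmδ : 1 < (m : ℝ) * δ := by
    have h1 : (1 : ℝ) / δ ≤ (⌈1 / δ⌉₊ : ℝ) := Nat.le_ceil _
    have h2 : ((m : ℕ) : ℝ) = (⌈1 / δ⌉₊ : ℝ) + 1 := by push_cast [hmdef]; ring
    rw [h2]
    have := (div_le_iff₀ hδpos).1 h1
    nlinarith
  -- the witnesses at level k
  obtain ⟨x, hx, y, hy, hxy⟩ := hcon k
  have hxr := mem_cyl_replicate.1 hx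
  have hyr := mem_cyl_replicate.1 hy
  set L : ℕ → ℝ := fun i => |M.f^[i] x - M.f^[i] y| with hLdef
  have hL0 : ε < L 0 := by simpa [hLdef] using hxy
  have hlen : (List.replicate k a).length = k := List.length_replicate
  have hLmono : ∀ i j : ℕ, i ≤ j → j ≤ k → L i ≤ L j := by
    intro i j hij hj
    exact dist_iter_mono hNmem hexp hx hy i j hij (by rwa [hlen])
  have hL1 : ∀ i < k, L i ≤ 1 := by
    intro i hi
    have h1 := M.subset_unit a (hxr i hi)
    have h2 := M.subset_unit a (hyr i hi)
    rw [hLdef]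
    rw [abs_le]
    constructor <;> [linarith [h1.1, h1.2, h2.1, h2.2]; linarith [h1.1, h1.2, h2.1, h2.2]]
  -- pigeonhole
  have hpig : ∃ i, i < m ∧ L (i + 1) - L i < δ := by
    by_contra hno
    push_neg at hno
    have hsum : (m : ℝ) * δ ≤ ∑ i ∈ Finset.range m, (L (i + 1) - L i) := by
      calc (m : ℝ) * δ = ∑ _i ∈ Finset.range m, δ := by
            rw [Finset.sum_const, Finset.card_range, nsmul_eq_mul]
        _ ≤ _ := Finset.sum_le_sum fun i hi => hno i (Finset.mem_range.1 hi)
    rw [Finset.sum_range_sub] at hsum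
    have hm1 : L m ≤ 1 := hL1 m (by omega)
    linarith
  obtain ⟨i, him, hgap⟩ := hpig
  -- FTC contradiction at index i
  have hik : i < k := by omega
  have hi1k : i + 1 ≤ k := by omega
  set p : ℝ := M.f^[i] x with hpdef
  set q : ℝ := M.f^[i] y with hqdef
  have hpΔ : p ∈ M.Δ a := hxr i hik
  have hqΔ : q ∈ M.Δ a := hyr i hik
  set u : ℝ := p ⊓ q with hudef
  set v : ℝ := p ⊔ q with hvdef
  have huv : u ≤ v := inf_le_sup
  have hLi : L i = v - u := by
    have hLpq : L i = |p - q| := rfl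
    rw [hLpq, hudef, hvdef]
    rcases le_total p q with hle | hle
    · rw [inf_eq_left.2 hle, sup_eq_right.2 hle, abs_of_nonpos (by linarith)]
      try ring
    · rw [inf_eq_right.2 hle, sup_eq_left.2 hle, abs_of_nonneg (by linarith)]
      try ring
  have hεLi : ε < L i := lt_of_lt_of_le hL0 (hLmono 0 i (Nat.zero_le _) hik.le)
  have huΔ : u ∈ M.Δ a := by
    rcases le_total p q with hle | hle
    · rwa [hudef, inf_eq_left.2 hle]
    · rwa [hudef, inf_eq_right.2 hle]
  have hvΔ : v ∈ M.Δ a := by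
    rcases le_total p q with hle | hle
    · rwa [hvdef, sup_eq_right.2 hle]
    · rwa [hvdef, sup_eq_left.2 hle]
  have hftc := ftc_gap (M := M) huΔ hvΔ huv
  have hLfv : |M.f v - M.f u| = L (i + 1) := by
    rw [hLdef]
    simp only []
    rw [Function.iterate_succ_apply', Function.iterate_succ_apply']
    rcases le_total p q with hle | hle
    · rw [hudef, hvdef, inf_eq_left.2 hle, sup_eq_right.2 hle, abs_sub_comm]
    · rw [hudef, hvdef, inf_eq_right.2 hle, sup_eq_left.2 hle]
  -- u ∈ A
  have hvε : u + ε ≤ v := by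
    have h1 := hεLi
    rw [hLi] at h1
    linarith
  have huA : u ∈ A := by
    refine ⟨subset_closure huΔ, ?_⟩
    simp only [mem_preimage]
    exact subset_closure ((M.ordConn a).out huΔ hvΔ ⟨by linarith, hvε⟩)
  have hmono_int : ∫ t in Ioo u (u + ε), φ t ≤ ∫ t in Ioo u v, φ t := by
    apply setIntegral_mono_set hInt.integrableOn
      (Filter.Eventually.of_forall hφ0)
    exact Filter.Eventually.of_forall (Ioo_subset_Ioo_right hvε)
  have hcontra : δ ≤ L (i + 1) - L i := by
    have h1 : δ ≤ h u := hδle u huA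
    rw [hwin u] at h1
    have h2 : (v - u) + ∫ t in Ioo u v, φ t ≤ L (i + 1) := by rw [← hLfv]; exact hftc
    rw [hLi]
    linarith
  linarith

end Block

end MarkovMap

/-- **(M3) implies uniform decay of cylinders** (Lemma 5.1). Let `f` be a non-uniformly
expanding Markov map, with neutral set `N` witnessing the non-uniform expansion. Assume
there is `s > 1` such that for every admissible word `a₁a₂` of length 2 such that `a₂`
is an expanding index or `a₁ ≠ a₂`, one has `|(f²)'| ≥ s` on `Δ_{a₁a₂}`. Then `f` has
uniform decay of cylinders. -/
theorem M3_implies_uniform_decay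
    {S : Type} [Countable S] (M : MarkovMap S)
    (N : Set (S × ℝ)) (hfin : N.Finite)
    (hNmem : ∀ p ∈ N, p.2 ∈ M.Δ p.1 ∧ |M.f' p.1 p.2| = 1)
    (hexp : ∀ a, ∀ x ∈ M.Δ a, (a, x) ∉ N → 1 < |M.f' a x|)
    (s : ℝ) (hs : 1 < s)
    (hM3 : ∀ a₁ a₂ : S, M.Δ a₂ ⊆ M.f '' M.Δ a₁ →
      ((∀ x : ℝ, (a₂, x) ∉ N) ∨ a₁ ≠ a₂) →
      ∀ x ∈ M.cyl [a₁, a₂], s ≤ |M.f' a₂ (M.f x) * M.f' a₁ x|) :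
    M.UniformDecay := by
  classical
  intro ε hε
  have hε2 : 0 < ε / 2 := by linarith
  have hblock := fun a : S => MarkovMap.block_decay hfin hNmem hexp a hε2
  choose K hK using hblock
  set F : Finset S := (hfin.image Prod.fst).toFinset with hF
  set k : ℕ := F.sup K + 2 with hk
  have hk2 : 2 ≤ k := by omega
  obtain ⟨G, hG⟩ := pow_unbounded_of_one_lt (2 / ε) hs
  refine ⟨G * (k + 1) + 2, ?_⟩
  intro w hadm hlen
  have hdiam : ∀ x ∈ M.cyl w, ∀ y ∈ M.cyl w, dist x y ≤ ε / 2 := by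
    intro x hxc y hyc
    rw [Real.dist_eq]
    set n := w.length with hn
    have hne : w ≠ [] := hadm.1
    have hnpos : 0 < n := by
      rw [hn]; exact List.length_pos_iff.2 hne
    set W : ℕ → S := fun j => w.getD j (w.head hne) with hWdef
    have hW : ∀ (j : ℕ) (hj : j < n), W j = w.get ⟨j, hj⟩ := fun j hj =>
      List.getD_eq_get (l := w) (d := w.head hne) (i := ⟨j, hj⟩)
    have hxm : ∀ j, j < n → M.f^[j] x ∈ M.Δ (W j) := by
      intro j hj
      rw [hW j hj]; exact hxc ⟨j, hj⟩
    have hym : ∀ j, j < n → M.f^[j] y ∈ M.Δ (W j) := by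
      intro j hj
      rw [hW j hj]; exact hyc ⟨j, hj⟩
    have hadm2 : ∀ j, j + 1 < n → M.Δ (W (j + 1)) ⊆ M.f '' M.Δ (W j) := by
      intro j hj
      have hch := (List.isChain_iff_getElem.1 hadm.2) j (by omega)
      rw [hW j (by omega), hW (j + 1) (by omega)]
      exact hch
    set d : ℕ → ℝ := fun j => |M.f^[j] x - M.f^[j] y| with hddef
    have hdmono : ∀ i j : ℕ, i ≤ j → j ≤ n → d i ≤ d j := fun i j hij hj =>
      MarkovMap.dist_iter_mono hNmem hexp hxc hyc i j hij hj
    have hd1 : ∀ m, m ≤ n → d m ≤ 1 := by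
      intro m hm
      rcases Nat.lt_or_ge m n with h | h
      · have h1 := M.subset_unit _ (hxm m h)
        have h2 := M.subset_unit _ (hym m h)
        rw [hddef]
        rw [abs_le]
        constructor <;> [skip; skip] <;>
          [linarith [h1.1, h1.2, h2.1, h2.2]; linarith [h1.1, h1.2, h2.1, h2.2]]
      · have hmn : m = n := le_antisymm hm h
        have hxn := M.maps_unit _ (hxm (n - 1) (by omega))
        have hyn := M.maps_unit _ (hym (n - 1) (by omega))
        have hrw : n - 1 + 1 = n := by omega
        have hfx : M.f^[m] x = M.f (M.f^[n - 1] x) := by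
          rw [hmn]
          conv_lhs => rw [← hrw]
          rw [Function.iterate_succ_apply']
        have hfy : M.f^[m] y = M.f (M.f^[n - 1] y) := by
          rw [hmn]
          conv_lhs => rw [← hrw]
          rw [Function.iterate_succ_apply']
        rw [hddef]
        simp only []
        rw [hfx, hfy, abs_le]
        constructor <;> [linarith [hxn.1, hxn.2, hyn.1, hyn.2];
          linarith [hxn.1, hxn.2, hyn.1, hyn.2]]
    have hgoal : d 0 ≤ ε / 2 := by
      by_cases hA : ∃ j, j + k ≤ n ∧ ∀ i, i < k - 1 →
          ¬((∀ z : ℝ, (W (j + i + 1), z) ∉ N) ∨ W (j + i) ≠ W (j + i + 1))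
      · -- long neutral block
        obtain ⟨j, hjk, hbad⟩ := hA
        have hbadc : ∀ i, i < k - 1 → (∃ z : ℝ, (W (j + i + 1), z) ∈ N) ∧
            W (j + i) = W (j + i + 1) := by
          intro i hi
          have := hbad i hi
          push_neg at this
          exact this
        have hconst : ∀ i, i ≤ k - 1 → W (j + i) = W j := by
          intro i
          induction i with
          | zero => intro _; rfl
          | succ i ih =>
            intro hi
            have hb := (hbadc i (by omega)).2
            have : j + (i + 1) = j + i + 1 := by omega
            rw [this, ← hb]
            exact ih (by omega)
        obtain ⟨⟨z, hz⟩, heq0⟩ := hbadc 0 (by omega)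
        have hzN : (W j, z) ∈ N := by
          rw [show j + 0 + 1 = j + 1 by omega] at hz heq0
          rw [show j + 0 = j from rfl] at heq0
          rw [heq0]; exact hz
        have haF : W j ∈ F := by
          rw [hF, Set.Finite.mem_toFinset]
          exact ⟨(W j, z), hzN, rfl⟩
        have hkK : K (W j) ≤ k := le_trans (Finset.le_sup haF) (by omega)
        have hxb : M.f^[j] x ∈ M.cyl (List.replicate (K (W j)) (W j)) := by
          rw [MarkovMap.mem_cyl_replicate]
          intro i hi
          rw [← Function.iterate_add_apply]
          have hmem := hxm (j + i) (by omega)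
          rw [hconst i (by omega)] at hmem
          rw [Nat.add_comm i j]
          exact hmem
        have hyb : M.f^[j] y ∈ M.cyl (List.replicate (K (W j)) (W j)) := by
          rw [MarkovMap.mem_cyl_replicate]
          intro i hi
          rw [← Function.iterate_add_apply]
          have hmem := hym (j + i) (by omega)
          rw [hconst i (by omega)] at hmem
          rw [Nat.add_comm i j]
          exact hmem
        have hdj : d j ≤ ε / 2 := hK (W j) _ hxb _ hyb
        exact le_trans (hdmono 0 j (by omega) (by omega)) hdj
      · -- many good transitions
        push_neg at hA
        have hclaim : ∀ t, t ≤ G → ∃ m, m ≤ t * (k + 1) ∧ s ^ t * d 0 ≤ d m := by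
          intro t
          induction t with
          | zero => exact fun _ => ⟨0, by omega, by simp⟩
          | succ t ih =>
            intro ht
            obtain ⟨m, hm, hdm⟩ := ih (by omega)
            have he2 : (t + 1) * (k + 1) = t * (k + 1) + (k + 1) := by ring
            have he1 : (t + 1) * (k + 1) ≤ G * (k + 1) :=
              Nat.mul_le_mul_right _ ht
            have hpk : t * (k + 1) + k ≤ n := by omega
            obtain ⟨i, hik, hgood⟩ := hA (t * (k + 1)) hpk
            set q : ℕ := t * (k + 1) + i with hq
            have hq2 : q + 2 ≤ n := by omega
            have hxq : M.f^[q] x ∈ M.cyl [W q, W (q + 1)] :=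
              MarkovMap.mem_cyl_pair.2 ⟨hxm q (by omega), by
                have hmem := hxm (q + 1) (by omega)
                rwa [Function.iterate_succ_apply'] at hmem⟩
            have hyq : M.f^[q] y ∈ M.cyl [W q, W (q + 1)] :=
              MarkovMap.mem_cyl_pair.2 ⟨hym q (by omega), by
                have hmem := hym (q + 1) (by omega)
                rwa [Function.iterate_succ_apply'] at hmem⟩
            have hM3q := hM3 (W q) (W (q + 1)) (hadm2 q (by omega)) hgood
            have h2s := MarkovMap.two_step (M := M) (by linarith : (0:ℝ) < s)
              hM3q hxq hyq
            have hrwx : M.f (M.f (M.f^[q] x)) = M.f^[q + 2] x := by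
              rw [show q + 2 = q + 1 + 1 from rfl, Function.iterate_succ_apply',
                Function.iterate_succ_apply']
            have hrwy : M.f (M.f (M.f^[q] y)) = M.f^[q + 2] y := by
              rw [show q + 2 = q + 1 + 1 from rfl, Function.iterate_succ_apply',
                Function.iterate_succ_apply']
            refine ⟨q + 2, by omega, ?_⟩
            have hdq : s ^ t * d 0 ≤ d q :=
              le_trans hdm (hdmono m q (by omega) (by omega))
            calc s ^ (t + 1) * d 0 = s * (s ^ t * d 0) := by ring
              _ ≤ s * d q := by
                  apply mul_le_mul_of_nonneg_left hdq (by linarith)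
              _ ≤ |M.f (M.f (M.f^[q] x)) - M.f (M.f (M.f^[q] y))| := h2s
              _ = d (q + 2) := by rw [hrwx, hrwy]
        obtain ⟨m, hm, hfinb⟩ := hclaim G le_rfl
        have hd0n : 0 ≤ d 0 := abs_nonneg _
        have hdm1 : d m ≤ 1 := hd1 m (by omega)
        have h2 : 2 < s ^ G * ε := (div_lt_iff₀ hε).1 hG
        have step1 : 2 * d 0 ≤ s ^ G * ε * d 0 :=
          mul_le_mul_of_nonneg_right h2.le hd0n
        have step2 : s ^ G * ε * d 0 = s ^ G * d 0 * ε := by ring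
        have step3 : s ^ G * d 0 * ε ≤ 1 * ε := by
          apply mul_le_mul_of_nonneg_right _ hε.le
          linarith
        linarith
    simpa [hddef] using hgoal
  have hb := Metric.diam_le_of_forall_dist_le hε2.le hdiam
  linarith
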